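/- Let L > 0, a_min ≥ 0, m > 0, η > 0, and b_1 > 0 with L·b_1 ≥ 1/e. Let ψ : ℝ → ℝ be differentiable at every u ≥ a_min with −ψ'(u) ≥ exp(−L u) for all u ≥ a_min, and let (a_t)_{t≥1} satisfy a_{t+1} = a_t − η m² ψ'(a_t) for all t ≥ 1, with a_1 > a_min. Then for every t ≥ 2 with (η m²/b_1)(t − 1) ≥ 1, the ratio r_t := a_t/b_1 satisfies r_t ≥ (1/(2 L b_1))·log((η m²/b_1)·(t − 1)). -/

import Mathlib

/-- Proposition 3, noiseless setting, τ* = 0: For L > 0,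
a_min ≥ 0, m > 0, η > 0, b_1 > 0 with L·b_1 ≥ 1/e, and ψ differentiable at
every u ≥ a_min with −ψ'(u) ≥ exp(−L u) there, the sequence
a_{t+1} = a_t − η m² ψ'(a_t) with a_1 > a_min satisfies: for every t ≥ 2 with
(η m²/b_1)(t − 1) ≥ 1, the ratio r_t = a_t/b_1 satisfies
r_t ≥ (1/(2 L b_1))·log((η m²/b_1)(t − 1)). -/
theorem stmt_18 (L amin m η b1 : ℝ) (hL : 0 < L) (hamin : 0 ≤ amin)
    (hm : 0 < m) (hη : 0 < η) (hb1 : 0 < b1) (hLb1 : L * b1 ≥ 1 / Real.exp 1)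
    (ψ : ℝ → ℝ)
    (hdiff : ∀ u : ℝ, amin ≤ u → DifferentiableAt ℝ ψ u)
    (hderiv : ∀ u : ℝ, amin ≤ u → -deriv ψ u ≥ Real.exp (-L * u))
    (a : ℕ → ℝ)
    (hrec : ∀ t ≥ 1, a (t + 1) = a t - η * m ^ 2 * deriv ψ (a t))
    (hinit : a 1 > amin) :
    ∀ t : ℕ, 2 ≤ t → (η * m ^ 2 / b1) * ((t : ℝ) - 1) ≥ 1 →
      a t / b1 ≥ (1 / (2 * L * b1)) *
        Real.log ((η * m ^ 2 / b1) * ((t : ℝ) - 1)) := by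
  set c : ℝ := η * m ^ 2 with hc
  have hcpos : 0 < c := by positivity
  -- main induction
  have key : ∀ t : ℕ, 1 ≤ t →
      amin < a t ∧ 1 + L * c * ((t : ℝ) - 1) ≤ Real.exp (L * a t) := by
    intro t ht
    induction t with
    | zero => omega
    | succ n ih =>
      rcases Nat.lt_or_ge n 1 with h | h
      · interval_cases n
        refine ⟨hinit, ?_⟩
        have h1 : 0 < a 1 := lt_of_le_of_lt hamin hinit
        have : (1 : ℝ) ≤ Real.exp (L * a 1) := by
          rw [← Real.exp_zero]
          apply Real.exp_le_exp.2
          positivity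
        simpa using this
      · obtain ⟨h1, h2⟩ := ih h
        have hd := hderiv (a n) (le_of_lt h1)
        have hrecn := hrec n h
        set E : ℝ := Real.exp (-L * a n) with hE
        have hEpos : 0 < E := Real.exp_pos _
        have hstep : a n + c * E ≤ a (n + 1) := by
          rw [hrecn]; nlinarith
        have e1 : Real.exp (L * a n) * Real.exp (L * (c * E)) ≤
            Real.exp (L * a (n + 1)) := by
          rw [← Real.exp_add]
          apply Real.exp_le_exp.2
          nlinarith
        have e2 : 1 + L * (c * E) ≤ Real.exp (L * (c * E)) := by
          have := Real.add_one_le_exp (L * (c * E))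
          linarith
        have e3 : Real.exp (L * a n) * E = 1 := by
          rw [hE, ← Real.exp_add]
          have : L * a n + -L * a n = 0 := by ring
          rw [this, Real.exp_zero]
        have hExp : Real.exp (L * a n) + L * c ≤ Real.exp (L * a (n + 1)) := by
          have hexpn : 0 < Real.exp (L * a n) := Real.exp_pos _
          have e4 : Real.exp (L * a n) * (1 + L * (c * E)) ≤
              Real.exp (L * a n) * Real.exp (L * (c * E)) :=
            mul_le_mul_of_nonneg_left e2 hexpn.le
          have e5 : Real.exp (L * a n) * (1 + L * (c * E)) =
              Real.exp (L * a n) + L * c := by linear_combination L * c * e3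
          linarith
        constructor
        · have : amin < a n + c * E := by nlinarith
          linarith
        · have hcast : ((n + 1 : ℕ) : ℝ) - 1 = ((n : ℝ) - 1) + 1 := by
            push_cast; ring
          rw [hcast]
          calc 1 + L * c * (((n : ℝ) - 1) + 1)
              = (1 + L * c * ((n : ℝ) - 1)) + L * c := by ring
            _ ≤ Real.exp (L * a n) + L * c := by linarith
            _ ≤ Real.exp (L * a (n + 1)) := hExp
  intro t ht hX
  obtain ⟨hpos, hexp⟩ := key t (by omega)
  set X : ℝ := (c / b1) * ((t : ℝ) - 1) with hXdef
  have hXc : L * c * ((t : ℝ) - 1) = L * b1 * X := by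
    rw [hXdef]; field_simp <;> ring
  have hepos : (0 : ℝ) < Real.exp 1 := Real.exp_pos 1
  have hX1 : (1 : ℝ) ≤ X := hX
  -- exp(L a t) ≥ 1 + X / e
  have h4 : 1 + X / Real.exp 1 ≤ Real.exp (L * a t) := by
    have hLb1X : X / Real.exp 1 ≤ L * b1 * X := by
      rw [div_eq_mul_inv, mul_comm X]
      have h1e : (Real.exp 1)⁻¹ ≤ L * b1 := by
        rwa [ge_iff_le, one_div] at hLb1
      nlinarith
    rw [hXc] at hexp
    linarith
  -- (1 + X/e)^2 ≥ X
  have h5 : X ≤ (1 + X / Real.exp 1) ^ 2 := by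
    have he4 : Real.exp 1 ≤ 4 := by
      have := Real.exp_one_lt_d9; linarith
    have hq : (0 : ℝ) ≤ Real.exp 1 ^ 3 * (4 - Real.exp 1) :=
      mul_nonneg (pow_pos hepos 3).le (by linarith)
    have key2 : X * Real.exp 1 ^ 2 ≤ (Real.exp 1 + X) ^ 2 := by
      nlinarith [sq_nonneg (X - (Real.exp 1 ^ 2 - 2 * Real.exp 1) / 2)]
    have heq : (1 + X / Real.exp 1) ^ 2 = (Real.exp 1 + X) ^ 2 / Real.exp 1 ^ 2 := by
      field_simp
    rw [heq, le_div_iff₀ (by positivity)]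
    linarith
  have h6 : X ≤ Real.exp (2 * L * a t) := by
    have heq : Real.exp (2 * L * a t) = Real.exp (L * a t) ^ 2 := by
      have h2 : 2 * L * a t = L * a t + L * a t := by ring
      rw [h2, Real.exp_add, sq]
    rw [heq]
    have hnn : (0 : ℝ) ≤ 1 + X / Real.exp 1 := by positivity
    calc X ≤ (1 + X / Real.exp 1) ^ 2 := h5
      _ ≤ Real.exp (L * a t) ^ 2 := by
          apply pow_le_pow_left₀ hnn h4 2
  have hlog : Real.log X ≤ 2 * L * a t := by
    rw [Real.log_le_iff_le_exp (by linarith)]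
    exact h6
  have h2Lb1 : (0 : ℝ) < 2 * L * b1 := by positivity
  rw [ge_iff_le]
  calc (1 / (2 * L * b1)) * Real.log X = Real.log X / (2 * L * b1) := by ring
    _ ≤ (2 * L * a t) / (2 * L * b1) := by gcongr
    _ = a t / b1 := by
        rw [mul_assoc, mul_assoc, mul_div_mul_left _ _ (two_ne_zero),
          mul_div_mul_left _ _ hL.ne']
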